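/- Higher-order Hardy-type inequality (Lemma 3.1): For every integer s ≥ 1 there exists a constant C > 0 (depending only on s) such that for every function u : ℝ → ℝ that is s times continuously differentiable on [0,1] and satisfies u(0) = 0 and u(1) = 0, one has Σ_{k=0}^{s-1} ( ∫_{0}^{1/2} |(d^k/dx^k)(u(x)/x)|² dx + ∫_{1/2}^{1} |(d^k/dx^k)(u(x)/(1−x))|² dx ) ≤ C Σ_{k=0}^{s} ∫_{0}^{1} |u^{(k)}(x)|² dx. -/

import Mathlib

open Set MeasureTheory intervalIntegral

private lemma udo01 : UniqueDiffOn ℝ (Icc (0:ℝ) 1) := uniqueDiffOn_Icc one_pos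

private lemma cont_iter {s k : ℕ} {u : ℝ → ℝ} (hu : ContDiffOn ℝ s u (Icc 0 1)) (hk : k ≤ s) :
    ContinuousOn (iteratedDerivWithin k u (Icc 0 1)) (Icc 0 1) :=
  hu.continuousOn_iteratedDerivWithin (by exact_mod_cast hk) udo01

private lemma hda_iter {s : ℕ} {u : ℝ → ℝ} (hu : ContDiffOn ℝ s u (Icc 0 1)) {k : ℕ} (hk : k < s)
    {x : ℝ} (hx : x ∈ Ioo (0:ℝ) 1) :
    HasDerivAt (iteratedDerivWithin k u (Icc 0 1)) (iteratedDerivWithin (k+1) u (Icc 0 1) x) x := by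
  have hxI : x ∈ Icc (0:ℝ) 1 := Ioo_subset_Icc_self hx
  have hd := hu.differentiableOn_iteratedDerivWithin (m := k) (by exact_mod_cast hk) udo01 x hxI
  have h1 : HasDerivWithinAt (iteratedDerivWithin k u (Icc 0 1))
      (derivWithin (iteratedDerivWithin k u (Icc 0 1)) (Icc 0 1) x) (Icc 0 1) x :=
    hd.hasDerivWithinAt
  rw [← iteratedDerivWithin_succ] at h1
  exact h1.hasDerivAt (Icc_mem_nhds hx.1 hx.2)

private lemma uIcc_sub {a b : ℝ} (ha : a ∈ Icc (0:ℝ) 1) (hb : b ∈ Icc (0:ℝ) 1) :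
    uIcc a b ⊆ Icc (0:ℝ) 1 := uIcc_subset_Icc ha hb

private lemma intInt_pow_mul {s k j : ℕ} {u : ℝ → ℝ} (hu : ContDiffOn ℝ s u (Icc 0 1))
    (hj : j ≤ s) {a b : ℝ} (ha : a ∈ Icc (0:ℝ) 1) (hb : b ∈ Icc (0:ℝ) 1) :
    IntervalIntegrable (fun τ => τ ^ k * iteratedDerivWithin j u (Icc 0 1) τ) volume a b := by
  apply ContinuousOn.intervalIntegrable
  exact ((continuousOn_pow k).mono (subset_univ _)).mul ((cont_iter hu hj).mono (uIcc_sub ha hb))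

private lemma ftc0 {s : ℕ} {u : ℝ → ℝ} (hu : ContDiffOn ℝ s u (Icc 0 1)) (hs : 1 ≤ s)
    (hu0 : u 0 = 0) {y : ℝ} (hy0 : 0 ≤ y) (hy1 : y ≤ 1) :
    ∫ τ in (0:ℝ)..y, iteratedDerivWithin 1 u (Icc 0 1) τ = u y := by
  have h := integral_eq_sub_of_hasDeriv_right_of_le hy0
    (f := u) (f' := iteratedDerivWithin 1 u (Icc 0 1))
    (hu.continuousOn.mono (Icc_subset_Icc le_rfl hy1))
    (fun x hx => by
      have := hda_iter hu hs (k := 0) ⟨hx.1, lt_of_lt_of_le hx.2 hy1⟩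
      rw [iteratedDerivWithin_zero] at this
      exact this.hasDerivWithinAt)
    (by simpa using intInt_pow_mul (k := 0) hu hs (left_mem_Icc.2 zero_le_one) ⟨hy0, hy1⟩)
  rw [h, hu0, sub_zero]

private lemma ibp_step {s k : ℕ} {u : ℝ → ℝ} (hu : ContDiffOn ℝ s u (Icc 0 1))
    (hk : k + 2 ≤ s) {y : ℝ} (hy : y ∈ Ioo (0:ℝ) 1) :
    (∫ τ in (0:ℝ)..y, τ ^ (k+1) * iteratedDerivWithin (k+2) u (Icc 0 1) τ)
      = y ^ (k+1) * iteratedDerivWithin (k+1) u (Icc 0 1) y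
        - ((k:ℝ)+1) * ∫ τ in (0:ℝ)..y, τ ^ k * iteratedDerivWithin (k+1) u (Icc 0 1) τ := by
  set f : ℕ → ℝ → ℝ := fun j => iteratedDerivWithin j u (Icc 0 1) with hf
  have hyI : y ∈ Icc (0:ℝ) 1 := Ioo_subset_Icc_self hy
  have h0 : (0:ℝ) ∈ Icc (0:ℝ) 1 := left_mem_Icc.2 zero_le_one
  have hcont : ContinuousOn (fun τ : ℝ => τ ^ (k+1) * f (k+1) τ) (Icc 0 y) :=
    ((continuousOn_pow (k+1)).mono (subset_univ _)).mul
      ((cont_iter hu (by omega)).mono (Icc_subset_Icc le_rfl hyI.2))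
  have hint1 : IntervalIntegrable (fun τ : ℝ => ((k:ℝ)+1) * (τ ^ k * f (k+1) τ)) volume 0 y :=
    (intInt_pow_mul (k := k) hu (by omega) h0 hyI).const_mul _
  have hint2 : IntervalIntegrable (fun τ : ℝ => τ ^ (k+1) * f (k+2) τ) volume 0 y :=
    intInt_pow_mul (k := k+1) hu (by omega) h0 hyI
  have hderiv : ∀ x ∈ Ioo (0:ℝ) y, HasDerivWithinAt (fun τ : ℝ => τ ^ (k+1) * f (k+1) τ)
      (((k:ℝ)+1) * (x ^ k * f (k+1) x) + x ^ (k+1) * f (k+2) x) (Ioi x) x := by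
    intro x hx
    have hx1 : x ∈ Ioo (0:ℝ) 1 := ⟨hx.1, lt_of_lt_of_le hx.2 hyI.2⟩
    have h1 : HasDerivAt (fun τ : ℝ => τ ^ (k+1)) (((k:ℝ)+1) * x ^ k) x := by
      simpa using hasDerivAt_pow (k+1) x
    have h2 : HasDerivAt (f (k+1)) (f (k+2) x) x := hda_iter hu (by omega : k + 1 < s) hx1
    have := h1.mul h2
    apply HasDerivAt.hasDerivWithinAt
    refine this.congr_deriv ?_
    ring
  have h := integral_eq_sub_of_hasDeriv_right_of_le hy.1.le hcont hderiv (hint1.add hint2)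
  rw [intervalIntegral.integral_add hint1 hint2, intervalIntegral.integral_const_mul] at h
  simp only [zero_pow (Nat.succ_ne_zero k), zero_mul, sub_zero] at h
  linarith [h]

private lemma hda_primitive {s k : ℕ} {u : ℝ → ℝ} (hu : ContDiffOn ℝ s u (Icc 0 1))
    (hk : k + 1 ≤ s) {y : ℝ} (hy : y ∈ Ioo (0:ℝ) 1) :
    HasDerivAt (fun z => ∫ τ in (0:ℝ)..z, τ ^ k * iteratedDerivWithin (k+1) u (Icc 0 1) τ)
      (y ^ k * iteratedDerivWithin (k+1) u (Icc 0 1) y) y := by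
  have hyI : y ∈ Icc (0:ℝ) 1 := Ioo_subset_Icc_self hy
  have hcontOn : ContinuousOn (fun τ : ℝ => τ ^ k * iteratedDerivWithin (k+1) u (Icc 0 1) τ)
      (Ioo (0:ℝ) 1) :=
    ((continuousOn_pow k).mono (subset_univ _)).mul ((cont_iter hu hk).mono Ioo_subset_Icc_self)
  exact integral_hasDerivAt_right
    (intInt_pow_mul (k := k) hu hk (left_mem_Icc.2 zero_le_one) hyI)
    (hcontOn.stronglyMeasurableAtFilter isOpen_Ioo y hy)
    (hcontOn.continuousAt (Ioo_mem_nhds hy.1 hy.2))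

private lemma repr_formula {s : ℕ} {u : ℝ → ℝ} (hu : ContDiffOn ℝ s u (Icc 0 1))
    (hu0 : u 0 = 0) {k : ℕ} (hk : k + 1 ≤ s) {y : ℝ} (hy : y ∈ Ioo (0:ℝ) 1) :
    iteratedDeriv k (fun z => u z / z) y
      = (∫ τ in (0:ℝ)..y, τ ^ k * iteratedDerivWithin (k+1) u (Icc 0 1) τ) / y ^ (k+1) := by
  induction k generalizing y with
  | zero =>
    rw [iteratedDeriv_zero]
    simp only [pow_one, pow_zero, one_mul]
    rw [ftc0 hu hk hu0 hy.1.le hy.2.le, pow_one]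
  | succ k ih =>
    have hk' : k + 1 ≤ s := by omega
    set I : ℕ → ℝ → ℝ :=
      fun j z => ∫ τ in (0:ℝ)..z, τ ^ j * iteratedDerivWithin (j+1) u (Icc 0 1) τ with hI
    have heq : iteratedDeriv k (fun z => u z / z) =ᶠ[nhds y] fun z => I k z / z ^ (k+1) := by
      filter_upwards [Ioo_mem_nhds hy.1 hy.2] with z hz
      exact ih hk' hz
    rw [iteratedDeriv_succ, heq.deriv_eq]
    have h1 : HasDerivAt (I k) (y ^ k * iteratedDerivWithin (k+1) u (Icc 0 1) y) y :=
      hda_primitive hu hk' hy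
    have h2 : HasDerivAt (fun z : ℝ => z ^ (k+1)) (((k:ℝ)+1) * y ^ k) y := by
      simpa using hasDerivAt_pow (k+1) y
    have hy0 : y ≠ 0 := ne_of_gt hy.1
    have hyp : y ^ (k+1) ≠ 0 := pow_ne_zero _ hy0
    have h3 := (h1.div h2 hyp).deriv
    rw [show (fun z => I k z / z ^ (k+1)) = (I k / fun z => z ^ (k+1)) from rfl, h3]
    have h4 := ibp_step hu hk hy
    show _ = (∫ τ in (0:ℝ)..y, τ ^ (k+1) * iteratedDerivWithin (k+2) u (Icc 0 1) τ) / y ^ (k+2)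
    rw [h4]
    show _ = (y ^ (k+1) * iteratedDerivWithin (k+1) u (Icc 0 1) y - ((k:ℝ)+1) * I k y) / y ^ (k+2)
    field_simp
    ring

private lemma cs_integral {μ : Measure ℝ} {F G : ℝ → ℝ}
    (hF : AEStronglyMeasurable F μ) (hG : AEStronglyMeasurable G μ)
    (hF2 : Integrable (fun x => F x ^ 2) μ) (hG2 : Integrable (fun x => G x ^ 2) μ)
    (hFnn : 0 ≤ᵐ[μ] F) (hGnn : 0 ≤ᵐ[μ] G) :
    (∫ x, F x * G x ∂μ) ^ 2 ≤ (∫ x, F x ^ 2 ∂μ) * ∫ x, G x ^ 2 ∂μ := by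
  have hconj : Real.HolderConjugate 2 2 := Real.HolderConjugate.two_two
  have hFm : MemLp F (ENNReal.ofReal 2) μ := by
    rw [show ENNReal.ofReal 2 = 2 by norm_num]
    exact (memLp_two_iff_integrable_sq hF).2 hF2
  have hGm : MemLp G (ENNReal.ofReal 2) μ := by
    rw [show ENNReal.ofReal 2 = 2 by norm_num]
    exact (memLp_two_iff_integrable_sq hG).2 hG2
  have h := integral_mul_le_Lp_mul_Lq_of_nonneg hconj hFnn hGnn hFm hGm
  have hA : (0:ℝ) ≤ ∫ x, F x ^ 2 ∂μ := integral_nonneg fun x => sq_nonneg _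
  have hB : (0:ℝ) ≤ ∫ x, G x ^ 2 ∂μ := integral_nonneg fun x => sq_nonneg _
  have hrw : ∀ f : ℝ → ℝ, (∫ x, f x ^ (2:ℝ) ∂μ) = ∫ x, f x ^ 2 ∂μ := by
    intro f
    congr 1
    ext x
    rw [show (2:ℝ) = ((2:ℕ):ℝ) by norm_num, Real.rpow_natCast]
  rw [hrw, hrw] at h
  have hFG : (0:ℝ) ≤ ∫ x, F x * G x ∂μ := by
    apply MeasureTheory.integral_nonneg_of_ae
    filter_upwards [hFnn, hGnn] with x h1 h2
    exact mul_nonneg h1 h2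
  calc (∫ x, F x * G x ∂μ) ^ 2
      ≤ ((∫ x, F x ^ 2 ∂μ) ^ (1/2:ℝ) * (∫ x, G x ^ 2 ∂μ) ^ (1/2:ℝ)) ^ 2 := by
        apply pow_le_pow_left₀ hFG h
    _ = (∫ x, F x ^ 2 ∂μ) * ∫ x, G x ^ 2 ∂μ := by
        rw [mul_pow, ← Real.rpow_natCast (_ ^ (1/2:ℝ)) 2, ← Real.rpow_natCast (_ ^ (1/2:ℝ)) 2,
          ← Real.rpow_mul hA, ← Real.rpow_mul hB]
        norm_num

private lemma cs_bound {g : ℝ → ℝ} (hg : ContinuousOn g (Icc 0 1)) (k : ℕ) {y : ℝ}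
    (hy0 : 0 < y) (hy1 : y ≤ 1) :
    (∫ τ in (0:ℝ)..y, τ ^ k * g τ) ^ 2
      ≤ y ^ (2*(k:ℝ) + 1/2) / (2*(k:ℝ) + 1/2)
        * ∫ τ in (0:ℝ)..y, Real.sqrt τ * (g τ)^2 := by
  have hsub : Ioo (0:ℝ) y ⊆ Icc (0:ℝ) 1 :=
    fun τ hτ => ⟨hτ.1.le, le_trans hτ.2.le hy1⟩
  set F : ℝ → ℝ := fun τ => τ ^ ((k:ℝ) - 1/4) with hF
  set G : ℝ → ℝ := fun τ => τ ^ ((1:ℝ)/4) * |g τ| with hG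
  set μ : Measure ℝ := volume.restrict (Ioo 0 y) with hμ
  have hFcont : ContinuousOn F (Ioo 0 y) := fun τ hτ =>
    (Real.continuousAt_rpow_const τ _ (Or.inl hτ.1.ne')).continuousWithinAt
  have hGcont : ContinuousOn G (Ioo 0 y) := by
    apply ContinuousOn.mul
    · exact fun τ hτ => (Real.continuousAt_rpow_const τ _ (Or.inl hτ.1.ne')).continuousWithinAt
    · exact (hg.mono hsub).abs
  have hFm : AEStronglyMeasurable F μ := hFcont.aestronglyMeasurable measurableSet_Ioo
  have hGm : AEStronglyMeasurable G μ := hGcont.aestronglyMeasurable measurableSet_Ioo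
  have hrexp : (-1:ℝ) < 2*(k:ℝ) - 1/2 := by
    have : (0:ℝ) ≤ (k:ℝ) := Nat.cast_nonneg k
    linarith
  have hF2 : Integrable (fun x => F x ^ 2) μ := by
    have h1 : IntegrableOn (fun τ : ℝ => τ ^ (2*(k:ℝ) - 1/2)) (Ioc 0 y) :=
      (intervalIntegrable_rpow' hrexp (a := 0) (b := y)).1
    refine ((h1.mono_set Ioo_subset_Ioc_self).congr_fun ?_ measurableSet_Ioo)
    intro τ hτ
    simp only [hF]
    rw [← Real.rpow_natCast (τ ^ ((k:ℝ) - 1/4)) 2, ← Real.rpow_mul hτ.1.le]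
    norm_num
    ring_nf
  have hG2 : Integrable (fun x => G x ^ 2) μ := by
    have h1 : IntegrableOn (fun τ : ℝ => Real.sqrt τ * (g τ)^2) (Icc 0 1) :=
      (Real.continuous_sqrt.continuousOn.mul (hg.pow 2)).integrableOn_Icc
    refine ((h1.mono_set hsub).congr_fun ?_ measurableSet_Ioo)
    intro τ hτ
    simp only [hG]
    rw [mul_pow, ← Real.rpow_natCast (τ ^ ((1:ℝ)/4)) 2, ← Real.rpow_mul hτ.1.le, sq_abs]
    rw [show (1:ℝ)/4 * (2:ℕ) = 1/2 by norm_num, ← Real.sqrt_eq_rpow]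
  have hFnn : 0 ≤ᵐ[μ] F := by
    filter_upwards [ae_restrict_mem measurableSet_Ioo] with τ hτ
    exact Real.rpow_nonneg hτ.1.le _
  have hGnn : 0 ≤ᵐ[μ] G := by
    filter_upwards [ae_restrict_mem measurableSet_Ioo] with τ hτ
    exact mul_nonneg (Real.rpow_nonneg hτ.1.le _) (abs_nonneg _)
  have hCS := cs_integral hFm hGm hF2 hG2 hFnn hGnn
  -- identify the integral of F * G
  have hFG_eq : ∫ x, F x * G x ∂μ = ∫ τ in Ioo (0:ℝ) y, τ ^ k * |g τ| := by
    apply setIntegral_congr_fun measurableSet_Ioo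
    intro τ hτ
    simp only [hF, hG]
    rw [← mul_assoc, ← Real.rpow_add hτ.1]
    rw [show ((k:ℝ) - 1/4 + 1/4 : ℝ) = (k:ℕ) by push_cast; ring, Real.rpow_natCast]
  have hA_eq : (∫ x, F x ^ 2 ∂μ) = y ^ (2*(k:ℝ) + 1/2) / (2*(k:ℝ) + 1/2) := by
    have h1 : (∫ x, F x ^ 2 ∂μ) = ∫ τ in Ioo (0:ℝ) y, τ ^ (2*(k:ℝ) - 1/2) := by
      apply setIntegral_congr_fun measurableSet_Ioo
      intro τ hτ
      simp only [hF]
      rw [← Real.rpow_natCast (τ ^ ((k:ℝ) - 1/4)) 2, ← Real.rpow_mul hτ.1.le]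
      norm_num
      ring_nf
    rw [h1, ← integral_Ioc_eq_integral_Ioo, ← intervalIntegral.integral_of_le hy0.le,
      integral_rpow (Or.inl hrexp),
      Real.zero_rpow (by intro h; linarith [(h ▸ (by linarith : (0:ℝ) < 2*(k:ℝ) - 1/2 + 1) : (0:ℝ) < 0)] : 2*(k:ℝ) - 1/2 + 1 ≠ 0)]
    ring_nf
  have hB_eq : (∫ x, G x ^ 2 ∂μ) = ∫ τ in (0:ℝ)..y, Real.sqrt τ * (g τ)^2 := by
    rw [intervalIntegral.integral_of_le hy0.le, integral_Ioc_eq_integral_Ioo]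
    symm
    apply setIntegral_congr_fun measurableSet_Ioo
    intro τ hτ
    simp only [hG]
    rw [mul_pow, ← Real.rpow_natCast (τ ^ ((1:ℝ)/4)) 2, ← Real.rpow_mul hτ.1.le, sq_abs,
      show (1:ℝ)/4 * ((2:ℕ):ℝ) = 1/2 by norm_num, ← Real.sqrt_eq_rpow]
  have habs : (∫ τ in (0:ℝ)..y, τ ^ k * g τ) ^ 2 ≤ (∫ x, F x * G x ∂μ) ^ 2 := by
    rw [intervalIntegral.integral_of_le hy0.le, integral_Ioc_eq_integral_Ioo, hFG_eq,
      ← sq_abs (∫ τ in Ioo (0:ℝ) y, τ ^ k * g τ)]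
    apply pow_le_pow_left₀ (abs_nonneg _)
    calc |∫ τ in Ioo (0:ℝ) y, τ ^ k * g τ|
        ≤ ∫ τ in Ioo (0:ℝ) y, |τ ^ k * g τ| := by
          have := MeasureTheory.norm_integral_le_integral_norm (μ := μ)
            (fun τ : ℝ => τ ^ k * g τ)
          simp only [Real.norm_eq_abs] at this
          exact this
      _ = ∫ τ in Ioo (0:ℝ) y, τ ^ k * |g τ| := by
          apply setIntegral_congr_fun measurableSet_Ioo
          intro τ hτ
          show |τ ^ k * g τ| = τ ^ k * |g τ|
          rw [abs_mul, abs_of_nonneg (pow_nonneg hτ.1.le k)]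
  calc (∫ τ in (0:ℝ)..y, τ ^ k * g τ) ^ 2
      ≤ (∫ x, F x * G x ∂μ) ^ 2 := habs
    _ ≤ (∫ x, F x ^ 2 ∂μ) * ∫ x, G x ^ 2 ∂μ := hCS
    _ = y ^ (2*(k:ℝ) + 1/2) / (2*(k:ℝ) + 1/2)
        * ∫ τ in (0:ℝ)..y, Real.sqrt τ * (g τ)^2 := by rw [hA_eq, hB_eq]

private lemma hardy_core {g : ℝ → ℝ} (hg : ContinuousOn g (Icc 0 1)) (k : ℕ) :
    ∫ y in (0:ℝ)..(1/2), ((∫ τ in (0:ℝ)..y, τ ^ k * g τ) / y ^ (k+1)) ^ 2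
      ≤ 4 * ∫ x in (0:ℝ)..1, (g x) ^ 2 := by
  obtain ⟨M, hM⟩ := isCompact_Icc.exists_bound_of_continuousOn hg
  simp only [Real.norm_eq_abs] at hM
  have hM0 : 0 ≤ M := le_trans (abs_nonneg _) (hM 0 (left_mem_Icc.2 zero_le_one))
  have hgsq : ∀ x ∈ Icc (0:ℝ) 1, (g x) ^ 2 ≤ M ^ 2 := fun x hx => by
    rw [← sq_abs]; exact pow_le_pow_left₀ (abs_nonneg _) (hM x hx) 2
  set Ψ : ℝ → ℝ := fun y => ∫ τ in (0:ℝ)..y, Real.sqrt τ * (g τ) ^ 2 with hΨdef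
  have hψcont : ContinuousOn (fun τ : ℝ => Real.sqrt τ * (g τ) ^ 2) (Icc 0 1) :=
    Real.continuous_sqrt.continuousOn.mul (hg.pow 2)
  have hψint : ∀ a b : ℝ, a ∈ Icc (0:ℝ) 1 → b ∈ Icc (0:ℝ) 1 →
      IntervalIntegrable (fun τ : ℝ => Real.sqrt τ * (g τ) ^ 2) volume a b := fun a b ha hb =>
    (hψcont.mono (uIcc_subset_Icc ha hb)).intervalIntegrable
  have hg2int : ∀ a b : ℝ, a ∈ Icc (0:ℝ) 1 → b ∈ Icc (0:ℝ) 1 →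
      IntervalIntegrable (fun τ : ℝ => (g τ) ^ 2) volume a b := fun a b ha hb =>
    ((hg.pow 2).mono (uIcc_subset_Icc ha hb)).intervalIntegrable
  have h01 : (0:ℝ) ∈ Icc (0:ℝ) 1 := left_mem_Icc.2 zero_le_one
  have h11 : (1:ℝ) ∈ Icc (0:ℝ) 1 := right_mem_Icc.2 zero_le_one
  have hhalf : (1/2:ℝ) ∈ Icc (0:ℝ) 1 := by norm_num
  have hΨnn : ∀ y ∈ Icc (0:ℝ) 1, 0 ≤ Ψ y := fun y hy =>
    intervalIntegral.integral_nonneg hy.1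
      (fun τ hτ => mul_nonneg (Real.sqrt_nonneg τ) (sq_nonneg _))
  have hΨle : ∀ y ∈ Icc (0:ℝ) 1, Ψ y ≤ M ^ 2 * (y * Real.sqrt y) := by
    intro y hy
    have step : Ψ y ≤ ∫ τ in (0:ℝ)..y, Real.sqrt y * M ^ 2 := by
      apply intervalIntegral.integral_mono_on hy.1 (hψint 0 y h01 hy)
        intervalIntegrable_const
      intro τ hτ
      have hτ1 : τ ∈ Icc (0:ℝ) 1 := ⟨hτ.1, le_trans hτ.2 hy.2⟩
      exact mul_le_mul (Real.sqrt_le_sqrt hτ.2) (hgsq τ hτ1) (sq_nonneg _)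
        (Real.sqrt_nonneg y)
    calc Ψ y ≤ ∫ τ in (0:ℝ)..y, Real.sqrt y * M ^ 2 := step
      _ = y * (Real.sqrt y * M ^ 2) := by
          rw [intervalIntegral.integral_const, smul_eq_mul, sub_zero]
      _ = M ^ 2 * (y * Real.sqrt y) := by ring
  have hΨderiv : ∀ y ∈ Ioo (0:ℝ) 1, HasDerivAt Ψ (Real.sqrt y * (g y) ^ 2) y := by
    intro y hy
    have hyI : y ∈ Icc (0:ℝ) 1 := Ioo_subset_Icc_self hy
    exact integral_hasDerivAt_right (hψint 0 y h01 hyI)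
      ((hψcont.mono Ioo_subset_Icc_self).stronglyMeasurableAtFilter isOpen_Ioo y hy)
      (hψcont.continuousAt (Icc_mem_nhds hy.1 hy.2))
  -- integration by parts estimate on [a, 1/2]
  have key : ∀ a : ℝ, 0 < a → a ≤ 1/2 →
      (∫ y in a..(1/2), Ψ y / (y * Real.sqrt y)) ≤ 2 * M ^ 2 * a
        + 2 * ∫ x in (0:ℝ)..1, (g x) ^ 2 := by
    intro a ha ha2
    have haI : a ∈ Icc (0:ℝ) 1 := ⟨ha.le, by linarith⟩
    have hsubIcc : Icc a (1/2:ℝ) ⊆ Ioo (0:ℝ) 1 := fun x hx =>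
      ⟨lt_of_lt_of_le ha hx.1, by have := hx.2; linarith⟩
    have hΨcont : ContinuousOn Ψ (Icc a (1/2)) := fun y hy =>
      ((hΨderiv y (hsubIcc hy)).continuousAt).continuousWithinAt
    have hPcont : ContinuousOn (fun y => -2 * Ψ y / Real.sqrt y) (Icc a (1/2)) := by
      apply ContinuousOn.div
      · exact (continuousOn_const.mul hΨcont)
      · exact Real.continuous_sqrt.continuousOn
      · intro y hy
        exact Real.sqrt_ne_zero'.2 (hsubIcc hy).1
    have hintegrand_cont : ContinuousOn
        (fun y => Ψ y / (y * Real.sqrt y) - 2 * (g y) ^ 2) (Icc a (1/2)) := by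
      apply ContinuousOn.sub
      · apply hΨcont.div
        · exact continuousOn_id.mul Real.continuous_sqrt.continuousOn
        · intro y hy
          have h1 := (hsubIcc hy).1
          positivity
      · exact continuousOn_const.mul
          ((hg.mono (fun x hx => ⟨le_trans ha.le hx.1, le_trans hx.2 (by norm_num)⟩)).pow 2)
    have hderivP : ∀ x ∈ Ioo a (1/2:ℝ), HasDerivWithinAt
        (fun y => -2 * Ψ y / Real.sqrt y)
        (Ψ x / (x * Real.sqrt x) - 2 * (g x) ^ 2) (Ioi x) x := by
      intro x hx
      have hx1 : x ∈ Ioo (0:ℝ) 1 := hsubIcc (Ioo_subset_Icc_self hx)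
      have hx0 : (0:ℝ) < x := hx1.1
      have hsq : Real.sqrt x ≠ 0 := Real.sqrt_ne_zero'.2 hx0
      have hc : HasDerivAt (fun y => -2 * Ψ y) (-2 * (Real.sqrt x * (g x) ^ 2)) x :=
        (hΨderiv x hx1).const_mul (-2)
      have hd : HasDerivAt Real.sqrt (1 / (2 * Real.sqrt x)) x :=
        Real.hasDerivAt_sqrt hx0.ne'
      have h5 := (hc.div hd hsq).hasDerivWithinAt (s := Ioi x)
      refine h5.congr_deriv ?_
      have hxx : Real.sqrt x * Real.sqrt x = x := Real.mul_self_sqrt hx0.le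
      rw [Real.sq_sqrt hx0.le]
      set r := Real.sqrt x with hr
      rw [← hxx]
      have hr0 : r ≠ 0 := hsq
      field_simp
      ring
    have hint : IntervalIntegrable
        (fun y => Ψ y / (y * Real.sqrt y) - 2 * (g y) ^ 2) volume a (1/2) := by
      apply ContinuousOn.intervalIntegrable
      rwa [uIcc_of_le ha2]
    have hftc := integral_eq_sub_of_hasDeriv_right_of_le ha2 hPcont hderivP hint
    have hI2 : IntervalIntegrable (fun y => 2 * (g y) ^ 2) volume a (1/2) := by
      apply ContinuousOn.intervalIntegrable
      apply continuousOn_const.mul ((hg.pow 2).mono ?_)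
      rw [uIcc_of_le ha2]
      exact fun x hx => ⟨le_trans ha.le hx.1, le_trans hx.2 (by norm_num)⟩
    have hI1 : IntervalIntegrable (fun y => Ψ y / (y * Real.sqrt y)) volume a (1/2) := by
      apply ContinuousOn.intervalIntegrable
      rw [uIcc_of_le ha2]
      apply hΨcont.div (continuousOn_id.mul Real.continuous_sqrt.continuousOn)
      intro y hy
      have h1 := (hsubIcc hy).1
      exact mul_ne_zero h1.ne' (Real.sqrt_ne_zero'.2 h1)
    have hsplit : (∫ y in a..(1/2), Ψ y / (y * Real.sqrt y))
        - ∫ y in a..(1/2), 2 * (g y) ^ 2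
        = -2 * Ψ (1/2) / Real.sqrt (1/2) - -2 * Ψ a / Real.sqrt a := by
      rw [← intervalIntegral.integral_sub hI1 hI2]
      exact hftc
    have hb1 : -2 * Ψ (1/2) / Real.sqrt (1/2) ≤ 0 := by
      apply div_nonpos_of_nonpos_of_nonneg
      · linarith [hΨnn (1/2) hhalf]
      · exact Real.sqrt_nonneg _
    have hb2 : 2 * Ψ a / Real.sqrt a ≤ 2 * M ^ 2 * a := by
      rw [div_le_iff₀ (Real.sqrt_pos.2 ha)]
      calc 2 * Ψ a ≤ 2 * (M ^ 2 * (a * Real.sqrt a)) := by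
            linarith [hΨle a haI]
        _ = 2 * M ^ 2 * a * Real.sqrt a := by ring
    have hgsub : ∫ y in a..(1/2), (g y) ^ 2 ≤ ∫ x in (0:ℝ)..1, (g x) ^ 2 := by
      have e1 : ∫ x in (0:ℝ)..1, (g x) ^ 2
          = (∫ x in (0:ℝ)..a, (g x) ^ 2) + (∫ x in a..(1/2:ℝ), (g x) ^ 2)
            + ∫ x in (1/2:ℝ)..1, (g x) ^ 2 := by
        rw [intervalIntegral.integral_add_adjacent_intervals (hg2int 0 a h01 haI)
          (hg2int a (1/2) haI hhalf),
          intervalIntegral.integral_add_adjacent_intervals (hg2int 0 (1/2) h01 hhalf)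
          (hg2int (1/2) 1 hhalf h11)]
      have p1 : 0 ≤ ∫ x in (0:ℝ)..a, (g x) ^ 2 :=
        intervalIntegral.integral_nonneg ha.le (fun x _ => sq_nonneg _)
      have p2 : 0 ≤ ∫ x in (1/2:ℝ)..1, (g x) ^ 2 :=
        intervalIntegral.integral_nonneg (by norm_num) (fun x _ => sq_nonneg _)
      linarith [e1]
    have h2g : ∫ y in a..(1/2), 2 * (g y) ^ 2 = 2 * ∫ y in a..(1/2), (g y) ^ 2 :=
      intervalIntegral.integral_const_mul 2 _
    have hneg : -2 * Ψ a / Real.sqrt a = -(2 * Ψ a / Real.sqrt a) := by ring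
    linarith [hsplit, hb1, hb2, hgsub, h2g, hneg]
  -- the primitive and its derivative
  have hφcont : ContinuousOn (fun τ : ℝ => τ ^ k * g τ) (Icc 0 1) :=
    ((continuousOn_pow k).mono (subset_univ _)).mul hg
  have hφint : ∀ b : ℝ, b ∈ Icc (0:ℝ) 1 →
      IntervalIntegrable (fun τ : ℝ => τ ^ k * g τ) volume 0 b := fun b hb =>
    (hφcont.mono (uIcc_subset_Icc h01 hb)).intervalIntegrable
  have hφderiv : ∀ y ∈ Ioo (0:ℝ) 1,
      HasDerivAt (fun z => ∫ τ in (0:ℝ)..z, τ ^ k * g τ) (y ^ k * g y) y := by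
    intro y hy
    exact integral_hasDerivAt_right (hφint y (Ioo_subset_Icc_self hy))
      ((hφcont.mono Ioo_subset_Icc_self).stronglyMeasurableAtFilter isOpen_Ioo y hy)
      (hφcont.continuousAt (Icc_mem_nhds hy.1 hy.2))
  set F : ℝ → ℝ := fun y => (∫ τ in (0:ℝ)..y, τ ^ k * g τ) / y ^ (k+1) with hFdef
  -- pointwise Cauchy–Schwarz bound
  have hpoint : ∀ y : ℝ, 0 < y → y ≤ 1/2 → F y ^ 2 ≤ 2 * (Ψ y / (y * Real.sqrt y)) := by
    intro y hy0 hy2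
    have hy1 : y ≤ 1 := by linarith
    have hIy := cs_bound hg k hy0 hy1
    have hsy : 0 < Real.sqrt y := Real.sqrt_pos.2 hy0
    have hyy : Real.sqrt y * Real.sqrt y = y := Real.mul_self_sqrt hy0.le
    have hΨy : 0 ≤ Ψ y := hΨnn y ⟨hy0.le, hy1⟩
    have hsplitpow : y ^ (2*(k:ℝ) + 1/2) = y ^ (2*k) * Real.sqrt y := by
      rw [show 2*(k:ℝ) + 1/2 = ((2*k:ℕ):ℝ) + 1/2 by push_cast; ring,
        Real.rpow_add hy0, Real.rpow_natCast, Real.sqrt_eq_rpow]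
    have step1 : (∫ τ in (0:ℝ)..y, τ ^ k * g τ) ^ 2
        ≤ 2 * (y ^ (2*k) * Real.sqrt y) * Ψ y := by
      calc (∫ τ in (0:ℝ)..y, τ ^ k * g τ) ^ 2
          ≤ y ^ (2*(k:ℝ) + 1/2) / (2*(k:ℝ) + 1/2) * Ψ y := hIy
        _ ≤ 2 * (y ^ (2*k) * Real.sqrt y) * Ψ y := by
            apply mul_le_mul_of_nonneg_right _ hΨy
            rw [hsplitpow, div_le_iff₀ (by positivity : (0:ℝ) < 2*(k:ℝ)+1/2)]
            nlinarith [mul_nonneg (pow_nonneg hy0.le (2*k)) hsy.le, Nat.cast_nonneg (α := ℝ) k]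
    rw [show F y = (∫ τ in (0:ℝ)..y, τ ^ k * g τ) / y ^ (k+1) from rfl, div_pow,
      div_le_iff₀ (by positivity : (0:ℝ) < (y ^ (k+1)) ^ 2)]
    calc (∫ τ in (0:ℝ)..y, τ ^ k * g τ) ^ 2
        ≤ 2 * (y ^ (2*k) * Real.sqrt y) * Ψ y := step1
      _ = 2 * (Ψ y / (y * Real.sqrt y)) * (y ^ (k+1)) ^ 2 := by
          set r := Real.sqrt y with hr
          rw [← hyy]
          have hr0 : r ≠ 0 := ne_of_gt hsy
          field_simp
          ring
    done
  have hFbound : ∀ y : ℝ, 0 < y → y ≤ 1/2 → F y ^ 2 ≤ 2 * M ^ 2 := by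
    intro y hy0 hy2
    refine le_trans (hpoint y hy0 hy2) ?_
    have hqq : Ψ y / (y * Real.sqrt y) ≤ M ^ 2 := by
      rw [div_le_iff₀ (by positivity : (0:ℝ) < y * Real.sqrt y)]
      exact hΨle y ⟨hy0.le, by linarith⟩
    linarith
  have hF0 : F 0 = 0 := by
    simp only [hFdef, intervalIntegral.integral_same, zero_div]
  have hFbd' : ∀ y ∈ Icc (0:ℝ) (1/2), F y ^ 2 ≤ 2 * M ^ 2 := by
    intro y hy
    rcases eq_or_lt_of_le hy.1 with h | h
    · rw [← h, hF0]
      norm_num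
      positivity
    · exact hFbound y h hy.2
  have hFcont : ContinuousOn (fun y => F y ^ 2) (Ioo 0 (1/2:ℝ)) := by
    apply ContinuousOn.pow
    apply ContinuousOn.div
    · intro y hy
      exact ((hφderiv y ⟨hy.1, by linarith [hy.2]⟩).continuousAt).continuousWithinAt
    · exact (continuousOn_pow (k+1)).mono (subset_univ _)
    · intro y hy
      exact pow_ne_zero _ (ne_of_gt hy.1)
  have hFint : IntervalIntegrable (fun y => F y ^ 2) volume 0 (1/2) := by
    rw [intervalIntegrable_iff_integrableOn_Ioc_of_le (by norm_num : (0:ℝ) ≤ 1/2)]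
    have hIoo : IntegrableOn (fun y => F y ^ 2) (Ioo 0 (1/2:ℝ)) := by
      refine ⟨hFcont.aestronglyMeasurable measurableSet_Ioo, ?_⟩
      apply HasFiniteIntegral.restrict_of_bounded (C := 2*M^2) measure_Ioo_lt_top
      filter_upwards [ae_restrict_mem measurableSet_Ioo] with y hy
      rw [Real.norm_eq_abs, abs_of_nonneg (sq_nonneg _)]
      exact hFbound y hy.1 hy.2.le
    exact hIoo.congr_set_ae Ioo_ae_eq_Ioc.symm
  have main : ∀ a : ℝ, 0 < a → a ≤ 1/2 →
      (∫ y in (0:ℝ)..(1/2), F y ^ 2) ≤ 6 * M ^ 2 * a + 4 * ∫ x in (0:ℝ)..1, (g x) ^ 2 := by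
    intro a ha ha2
    have haI : a ∈ Icc (0:ℝ) 1 := ⟨ha.le, by linarith⟩
    have hu1 : uIcc (0:ℝ) a ⊆ uIcc (0:ℝ) (1/2) := by
      rw [uIcc_of_le ha.le, uIcc_of_le (by norm_num : (0:ℝ) ≤ 1/2)]
      exact Icc_subset_Icc le_rfl ha2
    have hu2 : uIcc a (1/2:ℝ) ⊆ uIcc (0:ℝ) (1/2) := by
      rw [uIcc_of_le ha2, uIcc_of_le (by norm_num : (0:ℝ) ≤ 1/2)]
      exact Icc_subset_Icc ha.le le_rfl
    have hi1 := hFint.mono_set hu1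
    have hi2 := hFint.mono_set hu2
    have hsplit2 : (∫ y in (0:ℝ)..(1/2), F y ^ 2)
        = (∫ y in (0:ℝ)..a, F y ^ 2) + ∫ y in a..(1/2:ℝ), F y ^ 2 :=
      (intervalIntegral.integral_add_adjacent_intervals hi1 hi2).symm
    have hpart1 : (∫ y in (0:ℝ)..a, F y ^ 2) ≤ 2 * M ^ 2 * a := by
      calc (∫ y in (0:ℝ)..a, F y ^ 2) ≤ ∫ _y in (0:ℝ)..a, 2 * M ^ 2 := by
            apply intervalIntegral.integral_mono_on ha.le hi1 intervalIntegrable_const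
            intro y hy
            exact hFbd' y ⟨hy.1, le_trans hy.2 ha2⟩
        _ = 2 * M ^ 2 * a := by
            rw [intervalIntegral.integral_const, smul_eq_mul, sub_zero]
            ring
    have hΨcont2 : ContinuousOn (fun y => 2 * (Ψ y / (y * Real.sqrt y))) (Icc a (1/2)) := by
      apply continuousOn_const.mul
      apply ContinuousOn.div
      · intro y hy
        have hy1 : y ∈ Ioo (0:ℝ) 1 := ⟨lt_of_lt_of_le ha hy.1, by linarith [hy.2]⟩
        exact ((hΨderiv y hy1).continuousAt).continuousWithinAt
      · exact continuousOn_id.mul Real.continuous_sqrt.continuousOn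
      · intro y hy
        have hy0 : 0 < y := lt_of_lt_of_le ha hy.1
        positivity
    have hi3 : IntervalIntegrable (fun y => 2 * (Ψ y / (y * Real.sqrt y))) volume a (1/2) := by
      apply ContinuousOn.intervalIntegrable
      rwa [uIcc_of_le ha2]
    have hpart2 : (∫ y in a..(1/2:ℝ), F y ^ 2)
        ≤ ∫ y in a..(1/2:ℝ), 2 * (Ψ y / (y * Real.sqrt y)) := by
      apply intervalIntegral.integral_mono_on ha2 hi2 hi3
      intro y hy
      exact hpoint y (lt_of_lt_of_le ha hy.1) hy.2
    have hpart3 : (∫ y in a..(1/2:ℝ), 2 * (Ψ y / (y * Real.sqrt y)))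
        ≤ 2 * (2 * M ^ 2 * a + 2 * ∫ x in (0:ℝ)..1, (g x) ^ 2) := by
      rw [intervalIntegral.integral_const_mul]
      have := key a ha ha2
      linarith
    linarith [hsplit2, hpart1, hpart2, hpart3]
  apply le_of_forall_pos_le_add
  intro ε hε
  set a := min (1/2:ℝ) (ε / (6*M^2+1)) with hadef
  have ha0 : 0 < a := lt_min (by norm_num) (by positivity)
  have ha2 : a ≤ 1/2 := min_le_left _ _
  have h6 : 6 * M ^ 2 * a ≤ ε := by
    have h1 : a ≤ ε / (6*M^2+1) := min_le_right _ _
    have h2 : 6 * M ^ 2 * a ≤ 6 * M ^ 2 * (ε / (6*M^2+1)) :=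
      mul_le_mul_of_nonneg_left h1 (by positivity)
    have h3 : 6 * M ^ 2 * (ε / (6*M^2+1)) ≤ ε := by
      rw [mul_comm, div_mul_eq_mul_div, div_le_iff₀ (by positivity : (0:ℝ) < 6*M^2+1)]
      nlinarith [hε.le, sq_nonneg M, mul_nonneg hε.le (sq_nonneg M)]
    linarith
  linarith [main a ha0 ha2]

private lemma hardy_half {s : ℕ} {u : ℝ → ℝ} (hu : ContDiffOn ℝ s u (Icc 0 1)) (hu0 : u 0 = 0)
    {k : ℕ} (hk : k + 1 ≤ s) :
    ∫ x in (0:ℝ)..(1/2), (iteratedDeriv k (fun y => u y / y) x) ^ 2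
      ≤ 4 * ∫ x in (0:ℝ)..1, (iteratedDerivWithin (k+1) u (Icc 0 1) x) ^ 2 := by
  have hg : ContinuousOn (iteratedDerivWithin (k+1) u (Icc 0 1)) (Icc 0 1) := cont_iter hu hk
  have hcore := hardy_core hg k
  have heq : ∫ x in (0:ℝ)..(1/2), (iteratedDeriv k (fun y => u y / y) x) ^ 2
      = ∫ x in (0:ℝ)..(1/2),
        ((∫ τ in (0:ℝ)..x, τ ^ k * iteratedDerivWithin (k+1) u (Icc 0 1) τ) / x ^ (k+1)) ^ 2 := by
    apply intervalIntegral.integral_congr_ae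
    apply Filter.Eventually.of_forall
    intro x hx
    rw [uIoc_of_le (by norm_num : (0:ℝ) ≤ 1/2)] at hx
    have hx1 : x ∈ Ioo (0:ℝ) 1 := ⟨hx.1, lt_of_le_of_lt hx.2 (by norm_num)⟩
    rw [repr_formula hu hu0 hk hx1]
  rw [heq]
  exact hcore

private lemma iteratedDeriv_comp_one_sub (n : ℕ) (h : ℝ → ℝ) (a : ℝ) :
    iteratedDeriv n (fun x => h (1 - x)) a = (-1:ℝ) ^ n * iteratedDeriv n h (1 - a) := by
  have e : (fun x : ℝ => h (1 - x)) = fun x : ℝ => (fun z : ℝ => h (1 + z)) (-x) := by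
    funext x
    simp [sub_eq_add_neg]
  rw [e, iteratedDeriv_comp_neg n (fun z : ℝ => h (1 + z)) a,
    iteratedDeriv_comp_const_add n h 1]
  simp [sub_eq_add_neg, smul_eq_mul]

private lemma reflect_contDiffOn {s : ℕ} {u : ℝ → ℝ} (hu : ContDiffOn ℝ s u (Icc 0 1)) :
    ContDiffOn ℝ s (fun x => u (1 - x)) (Icc 0 1) := by
  have hmap : MapsTo (fun x : ℝ => 1 - x) (Icc 0 1) (Icc 0 1) := by
    intro z hz
    simp only [Set.mem_Icc] at hz ⊢
    constructor <;> linarith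
  exact hu.comp ((contDiff_const.sub contDiff_id).contDiffOn) hmap

private lemma reflect_iteratedDerivWithin {s : ℕ} {u : ℝ → ℝ}
    (hu : ContDiffOn ℝ s u (Icc 0 1)) {j : ℕ} (hj : j ≤ s) :
    ∀ x ∈ Icc (0:ℝ) 1, iteratedDerivWithin j (fun z => u (1 - z)) (Icc 0 1) x
      = (-1:ℝ) ^ j * iteratedDerivWithin j u (Icc 0 1) (1 - x) := by
  induction j with
  | zero =>
    intro x hx
    simp [iteratedDerivWithin_zero]
  | succ j ih =>
    intro x hx
    have hj' : j ≤ s := by omega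
    have hmx : (1 - x) ∈ Icc (0:ℝ) 1 := ⟨by linarith [hx.2], by linarith [hx.1]⟩
    rw [iteratedDerivWithin_succ]
    rw [derivWithin_congr (fun y hy => ih hj' y hy) (ih hj' x hx)]
    -- derivWithin of z ↦ (-1)^j * f j (1 - z)
    have hdiff := hu.differentiableOn_iteratedDerivWithin (m := j)
      (by exact_mod_cast (by omega : j < s)) udo01 (1-x) hmx
    have h1 : HasDerivWithinAt (iteratedDerivWithin j u (Icc 0 1))
        (iteratedDerivWithin (j+1) u (Icc 0 1) (1-x)) (Icc 0 1) (1-x) := by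
      have := hdiff.hasDerivWithinAt
      rwa [← iteratedDerivWithin_succ] at this
    have h2 : HasDerivWithinAt (fun z : ℝ => 1 - z) (-1) (Icc 0 1) x :=
      ((hasDerivAt_id x).const_sub 1).hasDerivWithinAt
    have hmap : MapsTo (fun z : ℝ => 1 - z) (Icc (0:ℝ) 1) (Icc (0:ℝ) 1) := by
      intro z hz
      simp only [Set.mem_Icc] at hz ⊢
      constructor <;> linarith
    have h3 : HasDerivWithinAt (fun z : ℝ => iteratedDerivWithin j u (Icc 0 1) (1 - z))
        (iteratedDerivWithin (j+1) u (Icc 0 1) (1-x) * (-1)) (Icc 0 1) x :=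
      HasDerivWithinAt.comp x h1 h2 hmap
    have h4 := (h3.const_mul ((-1:ℝ) ^ j)).derivWithin (udo01 x hx)
    rw [h4]
    ring

private lemma reflect_integral_sq {s : ℕ} {u : ℝ → ℝ}
    (hu : ContDiffOn ℝ s u (Icc 0 1)) {j : ℕ} (hj : j ≤ s) :
    ∫ x in (0:ℝ)..1, (iteratedDerivWithin j (fun z => u (1 - z)) (Icc 0 1) x) ^ 2
      = ∫ x in (0:ℝ)..1, (iteratedDerivWithin j u (Icc 0 1) x) ^ 2 := by
  have h1 : ∫ x in (0:ℝ)..1, (iteratedDerivWithin j (fun z => u (1 - z)) (Icc 0 1) x) ^ 2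
      = ∫ x in (0:ℝ)..1, (iteratedDerivWithin j u (Icc 0 1) (1 - x)) ^ 2 := by
    apply intervalIntegral.integral_congr_ae
    apply Filter.Eventually.of_forall
    intro x hx
    rw [uIoc_of_le (by norm_num : (0:ℝ) ≤ 1)] at hx
    rw [reflect_iteratedDerivWithin hu hj x ⟨hx.1.le, hx.2⟩]
    rw [mul_pow, show ((-1:ℝ)^j)^2 = 1 by
      rw [← pow_mul, mul_comm, pow_mul, neg_one_sq, one_pow], one_mul]
  rw [h1]
  have h2 := intervalIntegral.integral_comp_sub_left
    (fun x => (iteratedDerivWithin j u (Icc 0 1) x) ^ 2) 1 (a := 0) (b := 1)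
  simpa using h2

private lemma hardy_half2 {s : ℕ} {u : ℝ → ℝ} (hu : ContDiffOn ℝ s u (Icc 0 1)) (hu1 : u 1 = 0)
    {k : ℕ} (hk : k + 1 ≤ s) :
    ∫ x in (1/2:ℝ)..1, (iteratedDeriv k (fun y => u y / (1 - y)) x) ^ 2
      ≤ 4 * ∫ x in (0:ℝ)..1, (iteratedDerivWithin (k+1) u (Icc 0 1) x) ^ 2 := by
  set v : ℝ → ℝ := fun z => u (1 - z) with hv
  have hvC : ContDiffOn ℝ s v (Icc 0 1) := reflect_contDiffOn hu
  have hv0 : v 0 = 0 := by simp [hv, hu1]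
  have hfuneq : (fun y : ℝ => u y / (1 - y)) = fun y : ℝ => (fun z => v z / z) (1 - y) := by
    funext x
    simp only [hv]
    rw [show (1:ℝ) - (1 - x) = x by ring]
  have h1 : ∫ x in (1/2:ℝ)..1, (iteratedDeriv k (fun y => u y / (1 - y)) x) ^ 2
      = ∫ x in (0:ℝ)..(1/2), (iteratedDeriv k (fun z => v z / z) x) ^ 2 := by
    rw [hfuneq]
    have h3 : ∀ x : ℝ, (iteratedDeriv k (fun y => (fun z => v z / z) (1 - y)) x) ^ 2
        = (iteratedDeriv k (fun z => v z / z) (1 - x)) ^ 2 := by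
      intro x
      rw [iteratedDeriv_comp_one_sub k (fun z => v z / z), mul_pow, show ((-1:ℝ)^k)^2 = 1 by
        rw [← pow_mul, mul_comm, pow_mul, neg_one_sq, one_pow], one_mul]
    have h2 := intervalIntegral.integral_comp_sub_left
      (fun x => (iteratedDeriv k (fun z => v z / z) x) ^ 2) 1 (a := (1/2:ℝ)) (b := 1)
    calc ∫ x in (1/2:ℝ)..1, (iteratedDeriv k (fun y => (fun z => v z / z) (1 - y)) x) ^ 2
        = ∫ x in (1/2:ℝ)..1, (iteratedDeriv k (fun z => v z / z) (1 - x)) ^ 2 := by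
          apply intervalIntegral.integral_congr
          intro x _
          exact h3 x
      _ = ∫ x in (0:ℝ)..(1/2), (iteratedDeriv k (fun z => v z / z) x) ^ 2 := by
          norm_num at h2 ⊢
          convert h2 using 2 <;> norm_num
  rw [h1]
  calc ∫ x in (0:ℝ)..(1/2), (iteratedDeriv k (fun z => v z / z) x) ^ 2
      ≤ 4 * ∫ x in (0:ℝ)..1, (iteratedDerivWithin (k+1) v (Icc 0 1) x) ^ 2 :=
        hardy_half hvC hv0 hk
    _ = 4 * ∫ x in (0:ℝ)..1, (iteratedDerivWithin (k+1) u (Icc 0 1) x) ^ 2 := by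
        rw [reflect_integral_sq hu hk]

/-- Higher-order Hardy-type inequality (Lemma 3.1). -/
theorem higher_order_hardy (s : ℕ) (hs : 1 ≤ s) :
    ∃ C : ℝ, 0 < C ∧ ∀ u : ℝ → ℝ,
      ContDiffOn ℝ s u (Set.Icc 0 1) → u 0 = 0 → u 1 = 0 →
      ∑ k ∈ Finset.range s,
        ((∫ x in (0:ℝ)..(1/2), (iteratedDeriv k (fun y => u y / y) x) ^ 2) +
         (∫ x in (1/2:ℝ)..1, (iteratedDeriv k (fun y => u y / (1 - y)) x) ^ 2))
      ≤ C * ∑ k ∈ Finset.range (s + 1),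
          ∫ x in (0:ℝ)..1, (iteratedDerivWithin k u (Set.Icc 0 1) x) ^ 2 := by
  refine ⟨8, by norm_num, ?_⟩
  intro u hu hu0 hu1
  have hterm : ∀ k ∈ Finset.range s,
      ((∫ x in (0:ℝ)..(1/2), (iteratedDeriv k (fun y => u y / y) x) ^ 2) +
       (∫ x in (1/2:ℝ)..1, (iteratedDeriv k (fun y => u y / (1 - y)) x) ^ 2))
      ≤ 8 * ∫ x in (0:ℝ)..1, (iteratedDerivWithin (k+1) u (Set.Icc 0 1) x) ^ 2 := by
    intro k hkmem
    have hk : k + 1 ≤ s := Finset.mem_range.1 hkmem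
    have h1 := hardy_half hu hu0 hk
    have h2 := hardy_half2 hu hu1 hk
    linarith
  calc ∑ k ∈ Finset.range s,
        ((∫ x in (0:ℝ)..(1/2), (iteratedDeriv k (fun y => u y / y) x) ^ 2) +
         (∫ x in (1/2:ℝ)..1, (iteratedDeriv k (fun y => u y / (1 - y)) x) ^ 2))
      ≤ ∑ k ∈ Finset.range s,
          8 * ∫ x in (0:ℝ)..1, (iteratedDerivWithin (k+1) u (Set.Icc 0 1) x) ^ 2 :=
        Finset.sum_le_sum hterm
    _ = 8 * ∑ k ∈ Finset.range s,
          ∫ x in (0:ℝ)..1, (iteratedDerivWithin (k+1) u (Set.Icc 0 1) x) ^ 2 := by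
        rw [Finset.mul_sum]
    _ ≤ 8 * ∑ k ∈ Finset.range (s + 1),
          ∫ x in (0:ℝ)..1, (iteratedDerivWithin k u (Set.Icc 0 1) x) ^ 2 := by
        apply mul_le_mul_of_nonneg_left _ (by norm_num : (0:ℝ) ≤ 8)
        rw [Finset.sum_range_succ' (fun k =>
          ∫ x in (0:ℝ)..1, (iteratedDerivWithin k u (Set.Icc 0 1) x) ^ 2) s]
        have h0 : 0 ≤ ∫ x in (0:ℝ)..1, (iteratedDerivWithin 0 u (Set.Icc 0 1) x) ^ 2 :=
          intervalIntegral.integral_nonneg zero_le_one (fun x _ => sq_nonneg _)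
        linarith
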